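/- Under the conditions for existence of the coexistence equilibrium (Γ − 2μ > 2γμ/ν, all parameters positive), the determinant of the Jacobian of the reaction system at E* is strictly positive: det J* = (r/Q*²)·(1 − N*/ν)·N*·[ r·((Γ−2μ)²/(2νμγ))·N*² + 2μ√Δ_N + (γ/2)(Γ−2μ) ] > 0. -/

import Mathlib

set_option maxHeartbeats 2000000 in
theorem stmt_9 (r ν γ Γ μ : ℝ) (hr : 0 < r) (hν : 0 < ν) (hγ : 0 < γ) (hΓ : 0 < Γ)
    (hμ : 0 < μ) (hcond : Γ - 2 * μ > 2 * γ * μ / ν)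
    (ΔN Nstar Pstar Qstar : ℝ)
    (hΔN : ΔN = (r - γ / 2) ^ 2 + 4 * (r / ν) * (μ * γ ^ 2 / (Γ - 2 * μ)))
    (hNs : Nstar = (ν / (2 * r)) * (r - γ / 2 + Real.sqrt ΔN))
    (hPs : Pstar = (Γ / (2 * μ)) * Nstar - Γ * γ / (Γ - 2 * μ))
    (hQ : Qstar = γ + Nstar + Pstar - (4 * μ / Γ) * Pstar)
    (F G : ℝ → ℝ → ℝ)
    (hF : ∀ N P, F N P = r * (1 - N / ν) * N -
      (γ / 4) * ((γ + N + P) - Real.sqrt ((γ + N + P) ^ 2 - 4 * N * P)))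
    (hG : ∀ N P, G N P = (Γ / 4) * ((γ + N + P) - Real.sqrt ((γ + N + P) ^ 2 - 4 * N * P))
      - μ * P)
    (J11 J12 J21 J22 : ℝ)
    (hJ11 : J11 = deriv (fun N => F N Pstar) Nstar)
    (hJ12 : J12 = deriv (fun P => F Nstar P) Pstar)
    (hJ21 : J21 = deriv (fun N => G N Pstar) Nstar)
    (hJ22 : J22 = deriv (fun P => G Nstar P) Pstar) :
    J11 * J22 - J12 * J21 =
      (r / Qstar ^ 2) * (1 - Nstar / ν) * Nstar *
        (r * ((Γ - 2 * μ) ^ 2 / (2 * ν * μ * γ)) * Nstar ^ 2 + 2 * μ * Real.sqrt ΔN +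
          (γ / 2) * (Γ - 2 * μ)) ∧
    0 < J11 * J22 - J12 * J21 := by
  have hD : 0 < Γ - 2 * μ := lt_trans (by positivity) hcond
  have hΔpos : 0 < ΔN := by rw [hΔN]; positivity
  have hsp : 0 < Real.sqrt ΔN := Real.sqrt_pos.mpr hΔpos
  have hs : Real.sqrt ΔN = 2 * r * Nstar / ν - r + γ / 2 := by
    rw [hNs]; field_simp; ring
  have hsq := Real.sq_sqrt hΔpos.le
  rw [hs, hΔN] at hsq
  field_simp at hsq
  have hquadc : 2 * r * Nstar ^ 2 * (Γ - 2 * μ) =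
      (2 * r - γ) * Nstar * ν * (Γ - 2 * μ) + 2 * μ * γ ^ 2 * ν := by
    have h2 : (32 * r * ν) * (2 * r * Nstar ^ 2 * (Γ - 2 * μ)) =
        (32 * r * ν) * ((2 * r - γ) * Nstar * ν * (Γ - 2 * μ) + 2 * μ * γ ^ 2 * ν) := by
      linear_combination (4 * ν) * hsq
    exact mul_left_cancel₀ (by positivity) h2
  have hNpos : 0 < Nstar := by
    rw [hNs]
    have habs : |r - γ/2| < Real.sqrt ΔN := by
      rw [← Real.sqrt_sq_eq_abs]
      apply Real.sqrt_lt_sqrt (sq_nonneg _)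
      have hpos : 0 < 4 * (r / ν) * (μ * γ ^ 2 / (Γ - 2 * μ)) := by positivity
      rw [hΔN]; linarith
    have h3 : 0 < r - γ / 2 + Real.sqrt ΔN := by linarith [(abs_lt.mp habs).1]
    positivity
  have hνD : 2 * γ * μ < ν * (Γ - 2 * μ) := by
    rw [gt_iff_lt, div_lt_iff₀ hν] at hcond; nlinarith [hcond]
  have hNν : Nstar < ν := by
    by_contra hcon
    push_neg at hcon
    have h1 : 2 * γ * μ < Nstar * (Γ - 2 * μ) := lt_of_lt_of_le hνD (by nlinarith)
    have h2 : 0 ≤ 2 * r * Nstar * (Γ - 2 * μ) * (Nstar - ν) := by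
      have : (0:ℝ) ≤ Nstar - ν := by linarith
      positivity
    nlinarith [hquadc, h2, mul_pos (mul_pos hγ hν) (sub_pos.mpr h1)]
  have hxpos : 0 < Nstar * (Γ - 2 * μ) - 2 * μ * γ := by
    nlinarith [hquadc, mul_pos (mul_pos (mul_pos hr hNpos) hD) (sub_pos.mpr hNν),
      mul_pos hγ hν]
  have hQN : Qstar = Nstar * (Γ - 2 * μ) / (2 * μ) + 2 * μ * γ / (Γ - 2 * μ) := by
    rw [hQ, hPs]; field_simp; ring
  have hQ0 : 0 < Qstar := by rw [hQN]; positivity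
  have hQsq : (γ + Nstar + Pstar) ^ 2 - 4 * Nstar * Pstar = Qstar ^ 2 := by
    rw [hQ, hPs]; field_simp; ring
  have hsqrtQ : Real.sqrt ((γ + Nstar + Pstar) ^ 2 - 4 * Nstar * Pstar) = Qstar := by
    rw [hQsq]; exact Real.sqrt_sq hQ0.le
  have hne : (γ + Nstar + Pstar) ^ 2 - 4 * Nstar * Pstar ≠ 0 := by
    rw [hQsq]; positivity
  -- derivatives in N direction
  have hlin : HasDerivAt (fun y : ℝ => γ + y + Pstar) 1 Nstar := by
    simpa using (((hasDerivAt_id Nstar).const_add γ).add_const Pstar)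
  have hg1 : HasDerivAt (fun y => (γ + y + Pstar) ^ 2 - 4 * y * Pstar)
      (2 * (γ + Nstar + Pstar) - 4 * Pstar) Nstar := by
    have h2 := hlin.pow 2
    have h3 : HasDerivAt (fun y : ℝ => 4 * y * Pstar) (4 * Pstar) Nstar := by
      simpa [mul_comm, mul_assoc] using (((hasDerivAt_id Nstar).const_mul 4).mul_const Pstar)
    exact (h2.sub h3).congr_deriv (by ring)
  have hsqrt1 : HasDerivAt (fun y => Real.sqrt ((γ + y + Pstar) ^ 2 - 4 * y * Pstar))
      ((2 * (γ + Nstar + Pstar) - 4 * Pstar) / (2 * Qstar)) Nstar := by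
    have := hg1.sqrt hne
    rwa [hsqrtQ] at this
  have hpoly : HasDerivAt (fun x => r * (1 - x / ν) * x)
      (r * (-(1/ν)) * Nstar + r * (1 - Nstar / ν)) Nstar := by
    have hu : HasDerivAt (fun x : ℝ => r * (1 - x / ν)) (r * (-(1/ν))) Nstar := by
      have : HasDerivAt (fun x : ℝ => 1 - x / ν) (-(1/ν)) Nstar := by
        simpa [one_div] using ((hasDerivAt_id Nstar).div_const ν).const_sub 1
      simpa using this.const_mul r
    exact (hu.mul (hasDerivAt_id Nstar)).congr_deriv (by simp only [id_eq, mul_one])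
  have hJ11v : J11 = r * (-(1/ν)) * Nstar + r * (1 - Nstar / ν)
      - γ / 4 * (1 - (2 * (γ + Nstar + Pstar) - 4 * Pstar) / (2 * Qstar)) := by
    rw [hJ11, show (fun N => F N Pstar) = fun N => r * (1 - N / ν) * N -
      γ / 4 * ((γ + N + Pstar) - Real.sqrt ((γ + N + Pstar) ^ 2 - 4 * N * Pstar)) from
      funext fun x => hF x Pstar]
    exact (hpoly.sub ((hlin.sub hsqrt1).const_mul (γ/4))).deriv
  have hJ21v : J21 = Γ / 4 * (1 - (2 * (γ + Nstar + Pstar) - 4 * Pstar) / (2 * Qstar)) := by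
    rw [hJ21, show (fun N => G N Pstar) = fun N => Γ / 4 * ((γ + N + Pstar) -
      Real.sqrt ((γ + N + Pstar) ^ 2 - 4 * N * Pstar)) - μ * Pstar from
      funext fun x => hG x Pstar]
    simpa using (((hlin.sub hsqrt1).const_mul (Γ/4)).sub_const (μ * Pstar)).deriv
  -- derivatives in P direction
  have hlin2 : HasDerivAt (fun y : ℝ => γ + Nstar + y) 1 Pstar := by
    simpa using ((hasDerivAt_id Pstar).const_add (γ + Nstar))
  have hg2 : HasDerivAt (fun y => (γ + Nstar + y) ^ 2 - 4 * Nstar * y)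
      (2 * (γ + Nstar + Pstar) - 4 * Nstar) Pstar := by
    have h2 := hlin2.pow 2
    have h3 : HasDerivAt (fun y : ℝ => 4 * Nstar * y) (4 * Nstar) Pstar := by
      simpa using ((hasDerivAt_id Pstar).const_mul (4 * Nstar))
    exact (h2.sub h3).congr_deriv (by ring)
  have hsqrt2 : HasDerivAt (fun y => Real.sqrt ((γ + Nstar + y) ^ 2 - 4 * Nstar * y))
      ((2 * (γ + Nstar + Pstar) - 4 * Nstar) / (2 * Qstar)) Pstar := by
    have := hg2.sqrt hne
    rwa [hsqrtQ] at this
  have hJ12v : J12 = -(γ / 4 * (1 - (2 * (γ + Nstar + Pstar) - 4 * Nstar) / (2 * Qstar))) := by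
    rw [hJ12, show (fun P => F Nstar P) = fun P => r * (1 - Nstar / ν) * Nstar -
      γ / 4 * ((γ + Nstar + P) - Real.sqrt ((γ + Nstar + P) ^ 2 - 4 * Nstar * P)) from
      funext fun x => hF Nstar x]
    simpa using (((hlin2.sub hsqrt2).const_mul (γ/4)).const_sub (r * (1 - Nstar / ν) * Nstar)).deriv
  have hJ22v : J22 = Γ / 4 * (1 - (2 * (γ + Nstar + Pstar) - 4 * Nstar) / (2 * Qstar)) - μ := by
    rw [hJ22, show (fun P => G Nstar P) = fun P => Γ / 4 * ((γ + Nstar + P) -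
      Real.sqrt ((γ + Nstar + P) ^ 2 - 4 * Nstar * P)) - μ * P from
      funext fun x => hG Nstar x]
    have hμP : HasDerivAt (fun y : ℝ => μ * y) μ Pstar := by
      simpa using ((hasDerivAt_id Pstar).const_mul μ)
    exact (((hlin2.sub hsqrt2).const_mul (Γ/4)).sub hμP).deriv
  -- main equality
  have key : J11 * J22 - J12 * J21 =
      (r / Qstar ^ 2) * (1 - Nstar / ν) * Nstar *
        (r * ((Γ - 2 * μ) ^ 2 / (2 * ν * μ * γ)) * Nstar ^ 2 + 2 * μ * Real.sqrt ΔN +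
          (γ / 2) * (Γ - 2 * μ)) := by
    rw [hJ11v, hJ12v, hJ21v, hJ22v, hs, hPs, hQN]
    field_simp
    linear_combination (32*r*Γ^3*μ*Nstar^2 - 192*r*Γ^2*μ^2*Nstar^2 + 384*r*Γ*μ^3*Nstar^2 - 256*r*μ^4*Nstar^2 + 256*r*γ*Γ*μ^3*Nstar - 512*r*γ*μ^4*Nstar + 16*ν*γ*Γ^3*μ*Nstar - 96*ν*γ*Γ^2*μ^2*Nstar + 192*ν*γ*Γ*μ^3*Nstar - 128*ν*γ*μ^4*Nstar - 128*r*ν*γ*Γ*μ^3 + 256*r*ν*γ*μ^4 + 64*ν*γ^2*Γ*μ^3 - 128*ν*γ^2*μ^4) * hquadc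
  refine ⟨key, ?_⟩
  rw [key]
  have hb : 0 < r * ((Γ - 2 * μ) ^ 2 / (2 * ν * μ * γ)) * Nstar ^ 2 + 2 * μ * Real.sqrt ΔN +
      (γ / 2) * (Γ - 2 * μ) := by positivity
  have h1N : 0 < 1 - Nstar / ν := by
    rw [sub_pos, div_lt_one hν]; exact hNν
  positivity
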